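/- arXiv:1705.02300 — 3 statements merged into one kernel-verified Lean document; each statement's English description precedes it below -/
import Mathlib

section
/- Let φ : R → S be a homomorphism of commutative rings and let t ∈ R be an element that is a nonzerodivisor on R and whose image φ(t) is a nonzerodivisor on S. If S/tS is faithfully flat as a module over R/tR, then for every integer h ≥ 1 the quotient S/t^hS is faithfully flat as a module over R/t^hR. -/
/-- The statement that `S/rS` is faithfully flat as a module over `R/rR`, where the module structure is
induced by the ring homomorphism `R/rR → S/rS` obtained from `φ : R → S`. -/
def QuotSpanFaithfullyFlat {R S : Type*} [CommRing R] [CommRing S] (φ : R →+* S) (r : R) : Prop :=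
  letI : Algebra (R ⧸ Ideal.span {r}) (S ⧸ Ideal.span {φ r}) :=
    (Ideal.quotientMap (Ideal.span {φ r}) φ (by
      rw [Ideal.span_singleton_le_iff_mem, Ideal.mem_comap]
      exact Ideal.mem_span_singleton_self _)).toAlgebra
  Module.FaithfullyFlat (R ⧸ Ideal.span {r}) (S ⧸ Ideal.span {φ r})

universe u v

namespace QSFFAux

noncomputable def quotAlg {R : Type u} {S : Type v} [CommRing R] [CommRing S]
    (φ : R →+* S) (r : R) :
    Algebra (R ⧸ Ideal.span {r}) (S ⧸ Ideal.span {φ r}) :=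
  (Ideal.quotientMap (Ideal.span {φ r}) φ (by
      rw [Ideal.span_singleton_le_iff_mem, Ideal.mem_comap]
      exact Ideal.mem_span_singleton_self _)).toAlgebra

lemma qsff_iff {R : Type u} {S : Type v} [CommRing R] [CommRing S] (φ : R →+* S) (r : R) :
    QuotSpanFaithfullyFlat φ r ↔
      @Module.FaithfullyFlat (R ⧸ Ideal.span {r}) (S ⧸ Ideal.span {φ r}) _ _
        (quotAlg φ r).toModule :=
  Iff.rfl

lemma quot_smul {R : Type u} {S : Type v} [CommRing R] [CommRing S] (φ : R →+* S)
    (r a : R) (s : S) :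
    letI := quotAlg φ r
    (Ideal.Quotient.mk (Ideal.span {r}) a) • (Ideal.Quotient.mk (Ideal.span {φ r}) s)
      = Ideal.Quotient.mk (Ideal.span {φ r}) (φ a * s) := by
  letI := quotAlg φ r
  rw [Algebra.smul_def]
  show (algebraMap (R ⧸ Ideal.span {r}) (S ⧸ Ideal.span {φ r})) _ * _ = _
  show Ideal.quotientMap (Ideal.span {φ r}) φ _ (Ideal.Quotient.mk (Ideal.span {r}) a) * _ = _
  rw [Ideal.quotientMap_mk, ← map_mul]

section key

variable {R S : Type u} [CommRing R] [CommRing S]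

lemma key (φ : R →+* S) (t : R) (htS : φ t ∈ nonZeroDivisors S)
    (h1 : ∀ (ι : Type u) (_ : Fintype ι) (F : ι → R) (X : ι → S),
      (φ t ∣ ∑ i, φ (F i) * X i) →
      ∃ (κ : Type u) (_ : Fintype κ) (A : ι → κ → R) (Y : κ → S),
        (∀ i, φ t ∣ X i - ∑ j, φ (A i j) * Y j) ∧ (∀ j, t ∣ ∑ i, F i * A i j)) :
    ∀ h : ℕ, 1 ≤ h → ∀ (ι : Type u) (_ : Fintype ι) (F : ι → R) (X : ι → S),
      ((φ t) ^ h ∣ ∑ i, φ (F i) * X i) →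
      ∃ (κ : Type u) (_ : Fintype κ) (A : ι → κ → R) (Y : κ → S),
        (∀ i, (φ t) ^ h ∣ X i - ∑ j, φ (A i j) * Y j) ∧ (∀ j, t ^ h ∣ ∑ i, F i * A i j) := by
  intro h hle
  induction h, hle using Nat.le_induction with
  | base => simpa using h1
  | succ h hh ih =>
    intro ι _ F X hrel
    obtain ⟨κ, _, A, Y, hAY, hFA⟩ := ih ι ‹_› F X ((pow_dvd_pow _ (Nat.le_succ h)).trans hrel)
    have hX' : ∀ i, ∃ x', X i = ∑ j, φ (A i j) * Y j + (φ t) ^ h * x' := by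
      intro i
      obtain ⟨x', hx'⟩ := hAY i
      exact ⟨x', by linear_combination hx'⟩
    choose X' hX' using hX'
    choose G hG using hFA
    have hbig : ∑ i, φ (F i) * X i
        = (φ t) ^ h * (∑ j, φ (G j) * Y j + ∑ i, φ (F i) * X' i) := by
      calc ∑ i, φ (F i) * X i
          = ∑ i, (∑ j, φ (F i * A i j) * Y j + (φ t) ^ h * (φ (F i) * X' i)) := by
            refine Finset.sum_congr rfl fun i _ => ?_
            rw [hX' i, mul_add, Finset.mul_sum]
            congr 1
            · exact Finset.sum_congr rfl fun j _ => by rw [map_mul]; ring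
            · ring
        _ = ∑ j, (∑ i, φ (F i * A i j)) * Y j + (φ t) ^ h * ∑ i, φ (F i) * X' i := by
            rw [Finset.sum_add_distrib, Finset.sum_comm, Finset.mul_sum]
            simp only [Finset.sum_mul]
        _ = ∑ j, φ (t ^ h * G j) * Y j + (φ t) ^ h * ∑ i, φ (F i) * X' i := by
            simp only [← map_sum, hG]
        _ = _ := by
            simp only [map_mul, map_pow, Finset.mul_sum, mul_add]
            congr 1
            exact Finset.sum_congr rfl fun j _ => by ring
    have hdiv : φ t ∣ ∑ j, φ (G j) * Y j + ∑ i, φ (F i) * X' i := by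
      obtain ⟨c, hc⟩ := hrel
      refine ⟨c, mul_cancel_left_mem_nonZeroDivisors (pow_mem htS h) |>.mp ?_⟩
      rw [← hbig, hc]; ring
    obtain ⟨κ', _, B, Z, hBZ, hFB⟩ := h1 (κ ⊕ ι) inferInstance (Sum.elim G F)
      (Sum.elim Y X') (by rwa [Fintype.sum_sum_type])
    have hW : ∀ j, ∃ w, Y j = ∑ l, φ (B (Sum.inl j) l) * Z l + φ t * w := by
      intro j
      obtain ⟨w, hw⟩ := hBZ (Sum.inl j)
      simp only [Sum.elim_inl] at hw
      exact ⟨w, by linear_combination hw⟩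
    choose W hW using hW
    have hV : ∀ i, ∃ v, X' i = ∑ l, φ (B (Sum.inr i) l) * Z l + φ t * v := by
      intro i
      obtain ⟨v, hv⟩ := hBZ (Sum.inr i)
      simp only [Sum.elim_inr] at hv
      exact ⟨v, by linear_combination hv⟩
    choose V hV using hV
    choose H hH using hFB
    refine ⟨κ' ⊕ κ, inferInstance,
      fun i => Sum.elim (fun l => ∑ j, A i j * B (Sum.inl j) l + t ^ h * B (Sum.inr i) l)
        (fun j => t * A i j),
      Sum.elim Z W, fun i => ⟨V i, ?_⟩, fun p => ?_⟩
    · -- X i - ∑ = (φ t)^(h+1) * V i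
      rw [Fintype.sum_sum_type]
      simp only [Sum.elim_inl, Sum.elim_inr]
      have eY : ∑ j, φ (A i j) * Y j
          = ∑ l, (∑ j, φ (A i j * B (Sum.inl j) l)) * Z l + ∑ j, φ (t * A i j) * W j := by
        calc ∑ j, φ (A i j) * Y j
            = ∑ j, (∑ l, φ (A i j * B (Sum.inl j) l) * Z l + φ (t * A i j) * W j) := by
              refine Finset.sum_congr rfl fun j _ => ?_
              rw [hW j]; simp only [map_mul, Finset.mul_sum, mul_add]
              congr 1
              · exact Finset.sum_congr rfl fun l _ => by ring
              · ring
          _ = _ := by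
              rw [Finset.sum_add_distrib, Finset.sum_comm]
              simp only [Finset.sum_mul]
      rw [hX' i, eY, hV i]
      simp only [map_add, map_mul, map_pow, map_sum, add_mul, Finset.sum_add_distrib,
        Finset.mul_sum]
      ring_nf
      rw [Finset.mul_sum]
      ring_nf
    · rcases p with l | j
      · simp only [Sum.elim_inl]
        refine ⟨H l, ?_⟩
        calc ∑ i, F i * (∑ j, A i j * B (Sum.inl j) l + t ^ h * B (Sum.inr i) l)
            = ∑ j, (∑ i, F i * A i j) * B (Sum.inl j) l
              + t ^ h * ∑ i, F i * B (Sum.inr i) l := by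
              simp only [mul_add, Finset.sum_add_distrib, Finset.mul_sum]
              congr 1
              · rw [Finset.sum_comm]
                refine Finset.sum_congr rfl fun j _ => ?_
                rw [Finset.sum_mul]
                exact Finset.sum_congr rfl fun i _ => by ring
              · exact Finset.sum_congr rfl fun i _ => by ring
          _ = t ^ h * (∑ j, G j * B (Sum.inl j) l + ∑ i, F i * B (Sum.inr i) l) := by
              simp only [hG, mul_add, Finset.mul_sum]
              congr 1
              exact Finset.sum_congr rfl fun j _ => by ring
          _ = t ^ h * (t * H l) := by
              rw [← hH l, Fintype.sum_sum_type]
              simp only [Sum.elim_inl, Sum.elim_inr]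
          _ = t ^ (h + 1) * H l := by ring
      · simp only [Sum.elim_inr]
        refine ⟨G j, ?_⟩
        calc ∑ i, F i * (t * A i j) = t * ∑ i, F i * A i j := by
              rw [Finset.mul_sum]; exact Finset.sum_congr rfl fun i _ => by ring
          _ = t ^ (h + 1) * G j := by rw [hG j]; ring

end key

end QSFFAux

namespace QSFFAux

section core

variable {R S : Type u} [CommRing R] [CommRing S]

set_option maxHeartbeats 1000000 in
lemma h1_of_flat (φ : R →+* S) (t : R)
    (hf : @Module.Flat (R ⧸ Ideal.span {t}) (S ⧸ Ideal.span {φ t}) _ _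
      (quotAlg φ t).toModule) :
    ∀ (ι : Type u) (_ : Fintype ι) (F : ι → R) (X : ι → S),
      (φ t ∣ ∑ i, φ (F i) * X i) →
      ∃ (κ : Type u) (_ : Fintype κ) (A : ι → κ → R) (Y : κ → S),
        (∀ i, φ t ∣ X i - ∑ j, φ (A i j) * Y j) ∧ (∀ j, t ∣ ∑ i, F i * A i j) := by
  letI := quotAlg φ t
  intro ι _ F X hdvd
  have hrel : ∑ i, (Ideal.Quotient.mk (Ideal.span {t}) (F i))
      • (Ideal.Quotient.mk (Ideal.span {φ t}) (X i)) = 0 := by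
    simp only [quot_smul]
    rw [← map_sum, Ideal.Quotient.eq_zero_iff_mem, Ideal.mem_span_singleton]
    exact hdvd
  obtain ⟨κ, a, y, hxy, hfa⟩ :=
    @Module.Flat.isTrivialRelation_of_sum_smul_eq_zero _ _ _ _ (quotAlg φ t).toModule hf
      ι _ _ _ hrel
  choose A hA using fun i j => Ideal.Quotient.mk_surjective (a i j)
  choose Y hY using fun j => Ideal.Quotient.mk_surjective (y j)
  refine ⟨ULift.{u} (Fin κ), inferInstance, fun i j => A i j.down, fun j => Y j.down,
    fun i => ?_, fun j => ?_⟩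
  · rw [← Ideal.mem_span_singleton, ← Ideal.Quotient.eq]
    rw [map_sum]
    calc Ideal.Quotient.mk (Ideal.span {φ t}) (X i) = ∑ j, a i j • y j := hxy i
      _ = ∑ j, Ideal.Quotient.mk _ (φ (A i j) * Y j) := by
          refine Finset.sum_congr rfl fun j _ => ?_
          rw [← hA, ← hY, quot_smul]
      _ = ∑ j : ULift.{u} (Fin κ), Ideal.Quotient.mk (Ideal.span {φ t}) (φ (A i j.down) * Y j.down) :=
          (Fintype.sum_equiv Equiv.ulift
            (fun j : ULift.{u} (Fin κ) => Ideal.Quotient.mk (Ideal.span {φ t}) (φ (A i j.down) * Y j.down))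
            (fun j => Ideal.Quotient.mk (Ideal.span {φ t}) (φ (A i j) * Y j)) (fun _ => rfl)).symm
  · obtain ⟨j⟩ := j
    rw [← Ideal.mem_span_singleton, ← Ideal.Quotient.eq_zero_iff_mem, map_sum]
    calc ∑ i, Ideal.Quotient.mk (Ideal.span {t}) (F i * A i j)
        = ∑ i, Ideal.Quotient.mk (Ideal.span {t}) (F i) * a i j := by
          refine Finset.sum_congr rfl fun i _ => ?_
          rw [map_mul, hA]
      _ = 0 := hfa j

lemma flat_pow (φ : R →+* S) (t : R) (htS : φ t ∈ nonZeroDivisors S)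
    (hf : @Module.Flat (R ⧸ Ideal.span {t}) (S ⧸ Ideal.span {φ t}) _ _
      (quotAlg φ t).toModule) (h : ℕ) (hh : 1 ≤ h) :
    @Module.Flat (R ⧸ Ideal.span {t ^ h}) (S ⧸ Ideal.span {φ (t ^ h)}) _ _
      (quotAlg φ (t ^ h)).toModule := by
  letI := quotAlg φ (t ^ h)
  apply @Module.Flat.of_forall_isTrivialRelation _ _ _ _ (quotAlg φ (t ^ h)).toModule
  intro ι f x hsum
  choose F hF using fun i => Ideal.Quotient.mk_surjective (f i)
  choose X hX using fun i => Ideal.Quotient.mk_surjective (x i)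
  have hdvd : (φ t) ^ h ∣ ∑ i, φ (F i) * X i := by
    rw [← map_pow, ← Ideal.mem_span_singleton, ← Ideal.Quotient.eq_zero_iff_mem, map_sum]
    calc ∑ i, Ideal.Quotient.mk (Ideal.span {φ (t ^ h)}) (φ (F i) * X i)
        = ∑ i, f i • x i := by
          refine Finset.sum_congr rfl fun i _ => ?_
          rw [← hF, ← hX, quot_smul]
      _ = 0 := hsum
  obtain ⟨κ, _, A, Y, hAY, hFA⟩ :=
    key φ t htS (h1_of_flat φ t hf) h hh (ULift.{u} (Fin ι)) inferInstance
      (fun i => F i.down) (fun i => X i.down)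
      (hdvd.trans (dvd_of_eq (Fintype.sum_equiv Equiv.ulift.symm (fun i : Fin ι => φ (F i) * X i)
        (fun i : ULift.{u} (Fin ι) => φ (F i.down) * X i.down) (fun _ => rfl))))
  let e := Fintype.equivFin κ
  refine ⟨Fintype.card κ, fun i j => Ideal.Quotient.mk _ (A ⟨i⟩ (e.symm j)),
    fun j => Ideal.Quotient.mk _ (Y (e.symm j)), fun i => ?_, fun j => ?_⟩
  · calc x i = Ideal.Quotient.mk _ (X i) := (hX i).symm
      _ = Ideal.Quotient.mk (Ideal.span {φ (t ^ h)}) (∑ j, φ (A ⟨i⟩ j) * Y j) := by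
          rw [Ideal.Quotient.eq, Ideal.mem_span_singleton, map_pow]
          exact hAY ⟨i⟩
      _ = ∑ j, Ideal.Quotient.mk (Ideal.span {t ^ h}) (A ⟨i⟩ j)
            • Ideal.Quotient.mk (Ideal.span {φ (t ^ h)}) (Y j) := by
          rw [map_sum]
          exact Finset.sum_congr rfl fun j _ => (quot_smul φ (t ^ h) (A ⟨i⟩ j) (Y j)).symm
      _ = _ := (e.symm.sum_comp (fun j => Ideal.Quotient.mk (Ideal.span {t ^ h}) (A ⟨i⟩ j)
            • Ideal.Quotient.mk (Ideal.span {φ (t ^ h)}) (Y j))).symm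
  · calc ∑ i, f i * Ideal.Quotient.mk (Ideal.span {t ^ h}) (A ⟨i⟩ (e.symm j))
        = Ideal.Quotient.mk (Ideal.span {t ^ h}) (∑ i, F i * A ⟨i⟩ (e.symm j)) := by
          rw [map_sum]
          exact Finset.sum_congr rfl fun i _ => by rw [← hF, map_mul]
      _ = 0 := by
          rw [Ideal.Quotient.eq_zero_iff_mem, Ideal.mem_span_singleton]
          exact (hFA (e.symm j)).trans (dvd_of_eq (Fintype.sum_equiv Equiv.ulift
            (fun i : ULift.{u} (Fin ι) => F i.down * A i (e.symm j))
            (fun i : Fin ι => F i * A ⟨i⟩ (e.symm j)) (fun _ => rfl)))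

set_option maxHeartbeats 1000000 in
lemma smul_top_ne (φ : R →+* S) (t : R)
    (hflat : @Module.FaithfullyFlat (R ⧸ Ideal.span {t}) (S ⧸ Ideal.span {φ t}) _ _
      (quotAlg φ t).toModule) (h : ℕ) (hh : 1 ≤ h) :
    ∀ (m : Ideal (R ⧸ Ideal.span {t ^ h})), m.IsMaximal →
      letI := quotAlg φ (t ^ h)
      m • (⊤ : Submodule (R ⧸ Ideal.span {t ^ h}) (S ⧸ Ideal.span {φ (t ^ h)})) ≠ ⊤ := by
  letI := quotAlg φ (t ^ h)
  letI := quotAlg φ t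
  intro m hm hmtop
  have le1 : Ideal.span {t ^ h} ≤ Ideal.span {t} := by
    rw [Ideal.span_singleton_le_span_singleton]
    exact dvd_pow_self t (by omega)
  have le2 : Ideal.span {φ (t ^ h)} ≤ Ideal.span {φ t} := by
    rw [Ideal.span_singleton_le_span_singleton]
    exact map_dvd φ (dvd_pow_self t (by omega))
  set πR := Ideal.Quotient.factor le1 with hπR
  set πS := Ideal.Quotient.factor le2 with hπS
  have πRs : Function.Surjective πR := fun y => by
    obtain ⟨r, rfl⟩ := Ideal.Quotient.mk_surjective y
    exact ⟨Ideal.Quotient.mk _ r, Ideal.Quotient.factor_mk le1 r⟩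
  have mt_mem : Ideal.Quotient.mk (Ideal.span {t ^ h}) t ∈ m := by
    refine hm.isPrime.mem_of_pow_mem h ?_
    rw [← map_pow, Ideal.Quotient.eq_zero_iff_mem.mpr (Ideal.mem_span_singleton_self _)]
    exact m.zero_mem
  have hker : RingHom.ker πR ≤ m := by
    intro x hx
    obtain ⟨r, rfl⟩ := Ideal.Quotient.mk_surjective x
    rw [RingHom.mem_ker, Ideal.Quotient.factor_mk, Ideal.Quotient.eq_zero_iff_mem,
      Ideal.mem_span_singleton] at hx
    obtain ⟨c, rfl⟩ := hx
    rw [map_mul]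
    exact m.mul_mem_right _ mt_mem
  set m' := m.map πR with hm'def
  have hm'ne : m' ≠ ⊤ := by
    intro he
    have h2 := Ideal.comap_map_of_surjective πR πRs m
    rw [← hm'def, he, Ideal.comap_top] at h2
    refine hm.ne_top (top_le_iff.mp ?_)
    rw [h2]
    exact sup_le le_rfl (le_trans (le_of_eq (RingHom.ker_eq_comap_bot πR).symm) hker)
  have hsemi : ∀ (r : R ⧸ Ideal.span {t ^ h}) (n : S ⧸ Ideal.span {φ (t ^ h)}),
      πS (r • n) = πR r • πS n := by
    intro r n
    obtain ⟨a, rfl⟩ := Ideal.Quotient.mk_surjective r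
    obtain ⟨s, rfl⟩ := Ideal.Quotient.mk_surjective n
    rw [quot_smul, hπS, hπR, Ideal.Quotient.factor_mk, Ideal.Quotient.factor_mk,
      Ideal.Quotient.factor_mk, quot_smul]
  have key2 : m' • (⊤ : Submodule (R ⧸ Ideal.span {t}) (S ⧸ Ideal.span {φ t})) = ⊤ := by
    rw [eq_top_iff]
    rintro y -
    obtain ⟨s, rfl⟩ := Ideal.Quotient.mk_surjective y
    have hmem : Ideal.Quotient.mk (Ideal.span {φ (t ^ h)}) s ∈
        m • (⊤ : Submodule (R ⧸ Ideal.span {t ^ h}) (S ⧸ Ideal.span {φ (t ^ h)})) := by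
      rw [hmtop]; exact Submodule.mem_top
    have hall : ∀ x ∈ m • (⊤ : Submodule (R ⧸ Ideal.span {t ^ h}) (S ⧸ Ideal.span {φ (t ^ h)})),
        πS x ∈ m' • (⊤ : Submodule (R ⧸ Ideal.span {t}) (S ⧸ Ideal.span {φ t})) := by
      intro x hx
      refine Submodule.smul_induction_on hx (fun r hr n _ => ?_) (fun a b ha hb => ?_)
      · rw [hsemi]
        exact Submodule.smul_mem_smul (Ideal.mem_map_of_mem πR hr) Submodule.mem_top
      · rw [map_add]
        exact Submodule.add_mem _ ha hb
    have hy := hall _ hmem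
    rwa [hπS, Ideal.Quotient.factor_mk] at hy
  exact ((@Module.FaithfullyFlat.iff_flat_and_proper_ideal _ _ _ _
    (quotAlg φ t).toModule).mp hflat).2 m' hm'ne key2

theorem core (φ : R →+* S) (t : R)
    (htS : φ t ∈ nonZeroDivisors S) (hflat : QuotSpanFaithfullyFlat φ t)
    (h : ℕ) (hh : 1 ≤ h) : QuotSpanFaithfullyFlat φ (t ^ h) := by
  rw [qsff_iff] at hflat ⊢
  exact @Module.FaithfullyFlat.mk _ _ _ _ (quotAlg φ (t ^ h)).toModule
    (flat_pow φ t htS hflat.toFlat h hh)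
    (fun m hm => smul_top_ne φ t hflat h hh m hm)

end core




section transfer

lemma nzd_map {A : Type*} {B : Type*} [CommRing A] [CommRing B] (e : A ≃+* B) {a : A}
    (ha : a ∈ nonZeroDivisors A) : e a ∈ nonZeroDivisors B := by
  rw [mem_nonZeroDivisors_iff_right]
  intro y hy
  have h0 : e.symm y * a = 0 := by
    have := congrArg e.symm hy
    rwa [map_mul, e.symm_apply_apply, map_zero] at this
  have := mem_nonZeroDivisors_iff_right.mp ha _ h0
  calc y = e (e.symm y) := (e.apply_symm_apply y).symm
    _ = e 0 := by rw [this]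
    _ = 0 := map_zero e

set_option maxHeartbeats 1000000 in
lemma transfer {A : Type*} {B : Type*} {A' : Type*} {B' : Type*}
    [CommRing A] [CommRing B] [CommRing A'] [CommRing B']
    (eA : A ≃+* A') (eB : B ≃+* B') (g : A →+* B) (g' : A' →+* B')
    (hc : ∀ a, eB (g a) = g' (eA a)) (r : A)
    (H : QuotSpanFaithfullyFlat g r) : QuotSpanFaithfullyFlat g' (eA r) := by
  rw [qsff_iff] at H ⊢
  have hIJ : Ideal.span {eA r} = (Ideal.span {r}).map (eA : A →+* A') := by
    rw [Ideal.map_span, Set.image_singleton]; rfl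
  have hJJ : Ideal.span {g' (eA r)} = (Ideal.span {g r}).map (eB : B →+* B') := by
    rw [Ideal.map_span, Set.image_singleton, RingEquiv.coe_toRingHom, hc]
  set qeA := Ideal.quotientEquiv _ _ eA hIJ with hqeA
  set qeB := Ideal.quotientEquiv _ _ eB hJJ with hqeB
  letI instAB : Algebra (A ⧸ Ideal.span {r}) (B ⧸ Ideal.span {g r}) := quotAlg g r
  letI instA'B' : Algebra (A' ⧸ Ideal.span {eA r}) (B' ⧸ Ideal.span {g' (eA r)}) :=
    quotAlg g' (eA r)
  by_cases hsub : Subsingleton (A' ⧸ Ideal.span {eA r})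
  · haveI := hsub
    haveI : Subsingleton (B' ⧸ Ideal.span {g' (eA r)}) :=
      Module.subsingleton (A' ⧸ Ideal.span {eA r}) _
    exact @Module.FaithfullyFlat.of_linearEquiv _ _ _ _ _ _ _ _
      (Module.FaithfullyFlat.self _)
      { toFun := fun _ => (0 : A' ⧸ Ideal.span {eA r}), invFun := fun _ => 0,
        map_add' := fun _ _ => Subsingleton.elim _ _,
        map_smul' := fun _ _ => Subsingleton.elim _ _,
        left_inv := fun _ => Subsingleton.elim _ _,
        right_inv := fun _ => Subsingleton.elim _ _ }
  · haveI hnt : Nontrivial (A' ⧸ Ideal.span {eA r}) := not_subsingleton_iff_nontrivial.mp hsub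
    letI algA'A : Algebra (A' ⧸ Ideal.span {eA r}) (A ⧸ Ideal.span {r}) :=
      (qeA.symm.toRingHom).toAlgebra
    haveI FF1 : Module.FaithfullyFlat (A' ⧸ Ideal.span {eA r}) (A ⧸ Ideal.span {r}) :=
      @Module.FaithfullyFlat.of_linearEquiv _ _ _ _ _ _ _ _
        (Module.FaithfullyFlat.self _)
        { toFun := qeA, invFun := qeA.symm,
          map_add' := map_add qeA,
          map_smul' := fun a' x => by
            simp only [RingHom.id_apply]
            rw [Algebra.smul_def, RingHom.algebraMap_toAlgebra, smul_eq_mul, map_mul]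
            congr 1
            exact qeA.apply_symm_apply a'
          left_inv := qeA.symm_apply_apply,
          right_inv := qeA.apply_symm_apply }
    letI algAB' : Algebra (A ⧸ Ideal.span {r}) (B' ⧸ Ideal.span {g' (eA r)}) :=
      (qeB.toRingHom.comp (algebraMap (A ⧸ Ideal.span {r}) (B ⧸ Ideal.span {g r}))).toAlgebra
    haveI FF2 : Module.FaithfullyFlat (A ⧸ Ideal.span {r}) (B' ⧸ Ideal.span {g' (eA r)}) :=
      @Module.FaithfullyFlat.of_linearEquiv _ _ _ _ _ _ _ _ H
        { toFun := qeB.symm, invFun := qeB,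
          map_add' := map_add qeB.symm,
          map_smul' := fun a y => by
            simp only [RingHom.id_apply]
            rw [Algebra.smul_def, RingHom.algebraMap_toAlgebra, Algebra.smul_def]
            rw [map_mul, RingHom.comp_apply]
            congr 1
            exact qeB.symm_apply_apply _
          left_inv := qeB.apply_symm_apply,
          right_inv := qeB.symm_apply_apply }
    haveI htower : IsScalarTower (A' ⧸ Ideal.span {eA r}) (A ⧸ Ideal.span {r})
        (B' ⧸ Ideal.span {g' (eA r)}) := by
      refine IsScalarTower.of_algebraMap_eq fun x => ?_
      obtain ⟨a, rfl⟩ := Ideal.Quotient.mk_surjective x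
      rw [RingHom.algebraMap_toAlgebra, RingHom.algebraMap_toAlgebra]
      show Ideal.quotientMap (Ideal.span {g' (eA r)}) g' _ (Ideal.Quotient.mk (Ideal.span {eA r}) a) = _
      rw [Ideal.quotientMap_mk]
      show _ = (qeB.toRingHom.comp (Ideal.quotientMap _ g _)) (qeA.symm (Ideal.Quotient.mk _ a))
      rw [hqeA, Ideal.quotientEquiv_symm_mk, RingHom.comp_apply, Ideal.quotientMap_mk]
      show _ = qeB (Ideal.Quotient.mk _ (g (eA.symm a)))
      rw [hqeB, Ideal.quotientEquiv_mk, hc, eA.apply_symm_apply]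
    exact Module.FaithfullyFlat.trans (A' ⧸ Ideal.span {eA r}) (A ⧸ Ideal.span {r})
      (B' ⧸ Ideal.span {g' (eA r)})

end transfer

end QSFFAux

theorem main' {R : Type u} {S : Type v} [CommRing R] [CommRing S] (φ : R →+* S) (t : R)
    (htR : t ∈ nonZeroDivisors R) (htS : φ t ∈ nonZeroDivisors S)
    (hflat : QuotSpanFaithfullyFlat φ t) :
    ∀ h : ℕ, 1 ≤ h → QuotSpanFaithfullyFlat φ (t ^ h) := by
  intro h hh
  let eR : ULift.{v} R ≃+* R := ULift.ringEquiv
  let eS : ULift.{u} S ≃+* S := ULift.ringEquiv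
  let φ' : ULift.{v} R →+* ULift.{u} S := (eS.symm.toRingHom.comp φ).comp eR.toRingHom
  have hc1 : ∀ a : R, eS.symm (φ a) = φ' (eR.symm a) := fun a => by
    show _ = eS.symm (φ (eR (eR.symm a)))
    rw [eR.apply_symm_apply]
  have H1 : QuotSpanFaithfullyFlat φ' (eR.symm t) :=
    QSFFAux.transfer eR.symm eS.symm φ φ' hc1 t hflat
  have htS' : φ' (eR.symm t) ∈ nonZeroDivisors (ULift.{u} S) := by
    have he : φ' (eR.symm t) = eS.symm (φ t) := (hc1 t).symm
    rw [he]
    exact QSFFAux.nzd_map eS.symm htS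
  have H2 : QuotSpanFaithfullyFlat φ' ((eR.symm t) ^ h) :=
    QSFFAux.core φ' (eR.symm t) htS' H1 h hh
  have hc2 : ∀ a : ULift.{v} R, eS (φ' a) = φ (eR a) := fun a => by
    show eS (eS.symm (φ (eR a))) = _
    rw [eS.apply_symm_apply]
  have H3 := QSFFAux.transfer eR eS φ' φ hc2 ((eR.symm t) ^ h) H2
  rwa [map_pow, eR.apply_symm_apply] at H3


/-- If `t` is a nonzerodivisor on `R`, `φ t` is a nonzerodivisor on `S`, and `S/tS` is faithfully flat
over `R/tR`, then `S/t^hS` is faithfully flat over `R/t^hR` for every `h ≥ 1`. -/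
theorem quotSpanFaithfullyFlat_pow {R S : Type*} [CommRing R] [CommRing S] (φ : R →+* S) (t : R)
    (htR : t ∈ nonZeroDivisors R) (htS : φ t ∈ nonZeroDivisors S)
    (hflat : QuotSpanFaithfullyFlat φ t) :
    ∀ h : ℕ, 1 ≤ h → QuotSpanFaithfullyFlat φ (t ^ h) := by
  exact main' φ t htR htS hflat
end

section
/- Let R be an integral domain with fraction field K, let z_1, …, z_m ∈ R be nonzero elements generating the ideal J = (z_1, …, z_m), and let f ∈ R be integral over J, i.e., there exist n ≥ 1 and elements a_1, …, a_n ∈ R with a_j ∈ J^j for each j and f^n + a_1 f^{n-1} + ⋯ + a_{n-1} f + a_n = 0. Then for each i, the element f/z_i of K is integral over the R-subalgebra R[z_1/z_i, …, z_m/z_i] of K generated by the elements z_1/z_i, …, z_m/z_i. -/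
set_option synthInstance.maxHeartbeats 400000



/-- Key computation in Lemma A.2 (`lem.IntegralElementPartialNormalization`): if `f ∈ R` is
integral over the ideal `J = (z_1, …, z_m)`, then on each chart of the blowup of `J` the
element `f / z_i` is integral over `R[z_1/z_i, …, z_m/z_i]`. -/
theorem div_isIntegral_adjoin_of_isIntegral_over_ideal {R : Type*} [CommRing R] [IsDomain R]
    {m : ℕ} (z : Fin m → R) (hz : ∀ i, z i ≠ 0) (f : R)
    (n : ℕ) (hn : 1 ≤ n) (a : ℕ → R)
    (ha : ∀ j ∈ Finset.Icc 1 n, a j ∈ (Ideal.span (Set.range z)) ^ j)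
    (heq : f ^ n + ∑ j ∈ Finset.Icc 1 n, a j * f ^ (n - j) = 0)
    (i : Fin m) :
    IsIntegral
      (Algebra.adjoin R (Set.range fun j : Fin m =>
        algebraMap R (FractionRing R) (z j) / algebraMap R (FractionRing R) (z i)))
      (algebraMap R (FractionRing R) f / algebraMap R (FractionRing R) (z i)) := by
  set K := FractionRing R
  set φ := algebraMap R K with hφ
  set u := φ (z i) with hu
  have hu0 : u ≠ 0 := by
    simpa [hu] using (map_ne_zero_iff φ (IsFractionRing.injective R K)).mpr (hz i)
  set A := Algebra.adjoin R (Set.range fun j : Fin m => φ (z j) / u) with hA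
  have hJ : ∀ y ∈ Ideal.span (Set.range z), φ y / u ∈ A := by
    intro y hy
    have hy' : y ∈ Submodule.span R (Set.range z) := hy
    rw [Finsupp.mem_span_range_iff_exists_finsupp] at hy'
    obtain ⟨c, hc⟩ := hy'
    rw [← hc]
    simp only [Finsupp.sum, map_sum, Finset.sum_div]
    rw [Finset.sum_div]; refine Subalgebra.sum_mem (S := A) fun k _ => ?_
    have h1 : φ (c k • z k) / u = φ (c k) * (φ (z k) / u) := by
      simp [smul_eq_mul, map_mul, mul_div_assoc]
    rw [h1]
    exact A.mul_mem (A.algebraMap_mem _) (Algebra.subset_adjoin ⟨k, rfl⟩)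
  have hJpow : ∀ (j : ℕ) (y : R), y ∈ (Ideal.span (Set.range z)) ^ j → φ y / u ^ j ∈ A := by
    intro j
    induction j with
    | zero => intro y _; simp only [pow_zero, div_one]; exact A.algebraMap_mem y
    | succ j ih =>
      intro y hy
      rw [pow_succ] at hy
      refine Submodule.mul_induction_on hy ?_ ?_
      · intro p hp q hq
        have h1 : φ (p * q) / u ^ (j + 1) = (φ p / u ^ j) * (φ q / u) := by
          rw [map_mul, pow_succ, div_mul_div_comm]
        rw [h1]
        exact A.mul_mem (ih p hp) (hJ q hq)
      · intro p q hp hq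
        rw [map_add, add_div]
        exact A.add_mem hp hq
  set x := φ f / u with hx
  set b : ℕ → K := fun j => φ (a j) / u ^ j with hb
  have hbA : ∀ j ∈ Finset.Icc 1 n, b j ∈ A := fun j hj => hJpow j _ (ha j hj)
  set p : Polynomial A :=
    Polynomial.X ^ n + ∑ j ∈ (Finset.Icc 1 n).attach,
      Polynomial.C (⟨b j.1, hbA j.1 j.2⟩ : A) * Polynomial.X ^ (n - j.1) with hp
  refine ⟨p, ?_, ?_⟩
  · -- monic
    refine Polynomial.monic_X_pow_add ?_
    refine lt_of_le_of_lt (Polynomial.degree_sum_le _ _) ?_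
    refine lt_of_le_of_lt (Finset.sup_le fun j hj =>
      (Polynomial.degree_C_mul_X_pow_le _ _).trans ?_)
      (b := ((n - 1 : ℕ) : WithBot ℕ)) ?_
    · exact_mod_cast Nat.sub_le_sub_left (Finset.mem_Icc.mp j.2).1 n
    · exact_mod_cast WithBot.coe_lt_coe.mpr (by omega)
  · -- evaluation
    have hxpow : x ^ n = φ f ^ n / u ^ n := by
      rw [hx, div_pow]
    have hterm : ∀ j ∈ Finset.Icc 1 n,
        b j * x ^ (n - j) = φ (a j * f ^ (n - j)) / u ^ n := by
      intro j hj
      have hjn : j ≤ n := (Finset.mem_Icc.mp hj).2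
      rw [map_mul, map_pow, hb, hx, div_pow, div_mul_div_comm, ← pow_add,
        Nat.add_sub_cancel' hjn]
    have key : (Polynomial.aeval x) p = 0 := by
      simp only [hp, map_add, map_sum, map_mul, map_pow, Polynomial.aeval_X,
        Polynomial.aeval_C]
      have : ∀ j ∈ (Finset.Icc 1 n).attach,
          (algebraMap A K) (⟨b j.1, hbA j.1 j.2⟩ : A) * x ^ (n - j.1)
            = φ (a j.1 * f ^ (n - j.1)) / u ^ n := by
        intro j _
        exact hterm j.1 j.2
      rw [Finset.sum_congr rfl this, hxpow, Finset.sum_attach (Finset.Icc 1 n)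
        (fun j => φ (a j * f ^ (n - j)) / u ^ n), ← Finset.sum_div, ← map_pow,
        ← map_sum, ← add_div, ← map_add, heq, map_zero, zero_div]
    exact key
end

section
/- Let R be an integrally closed integral domain with fraction field K, let z_1, …, z_m ∈ R be nonzero elements generating the ideal J = (z_1, …, z_m), fix an index i, and let R_i = R[z_1/z_i, …, z_m/z_i] ⊆ K be the R-subalgebra generated by z_1/z_i, …, z_m/z_i. If x ∈ K is integral over R_i, then there exist an integer h ≥ 1 and an element u ∈ R such that x = u/z_i^h in K and u is integral over the ideal J^h, i.e., there exist l ≥ 1 and elements b_1, …, b_l ∈ R with b_j ∈ (J^h)^j for each j and u^l + b_1 u^{l-1} + ⋯ + b_l = 0. -/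
open Polynomial

/-- Every element of the chart `R_i` acquires, after multiplying by a high enough power of
`z i`, a numerator in the corresponding power of `J`. -/
theorem aux_chart_denom {R : Type*} [CommRing R] [IsDomain R] {m : ℕ} (z : Fin m → R)
    (hz : ∀ i, z i ≠ 0) (i : Fin m) (s : FractionRing R)
    (hs : s ∈ Algebra.adjoin R (Set.range fun j : Fin m =>
      algebraMap R (FractionRing R) (z j) / algebraMap R (FractionRing R) (z i))) :
    ∃ h : ℕ, ∀ h' ≥ h, ∃ c ∈ (Ideal.span (Set.range z)) ^ h',
      s * (algebraMap R (FractionRing R) (z i)) ^ h'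
        = algebraMap R (FractionRing R) c := by
  set φ := algebraMap R (FractionRing R) with hφ
  have hinj : Function.Injective φ := IsFractionRing.injective R (FractionRing R)
  have hzi : φ (z i) ≠ 0 := fun h => hz i (hinj (by simpa using h))
  have hmemJ : ∀ j, z j ∈ Ideal.span (Set.range z) :=
    fun j => Ideal.subset_span ⟨j, rfl⟩
  set J := Ideal.span (Set.range z) with hJ
  induction hs using Algebra.adjoin_induction with
  | mem t ht =>
    obtain ⟨j, rfl⟩ := ht
    refine ⟨1, fun h' hh' => ⟨z i ^ (h' - 1) * z j, ?_, ?_⟩⟩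
    · have hpow : J ^ h' = J ^ (h' - 1) * J := by
        rw [← pow_succ]; congr 1; omega
      rw [hpow]
      exact Ideal.mul_mem_mul (Ideal.pow_mem_pow (hmemJ i) _) (hmemJ j)
    · have hp : φ (z i) ^ h' = φ (z i) ^ (h' - 1) * φ (z i) := by
        rw [← pow_succ]; congr 1; omega
      rw [hp, map_mul, map_pow]
      field_simp
  | algebraMap r =>
    refine ⟨0, fun h' _ => ⟨r * z i ^ h', ?_, by rw [map_mul, map_pow]⟩⟩
    exact Ideal.mul_mem_left _ r (Ideal.pow_mem_pow (hmemJ i) _)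
  | add a b ha hb iha ihb =>
    obtain ⟨h1, H1⟩ := iha
    obtain ⟨h2, H2⟩ := ihb
    refine ⟨max h1 h2, fun h' hh' => ?_⟩
    obtain ⟨c1, m1, e1⟩ := H1 h' (le_trans (le_max_left _ _) hh')
    obtain ⟨c2, m2, e2⟩ := H2 h' (le_trans (le_max_right _ _) hh')
    exact ⟨c1 + c2, add_mem m1 m2, by rw [add_mul, e1, e2, map_add]⟩
  | mul a b ha hb iha ihb =>
    obtain ⟨h1, H1⟩ := iha
    obtain ⟨h2, H2⟩ := ihb
    refine ⟨h1 + h2, fun h' hh' => ?_⟩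
    obtain ⟨c1, m1, e1⟩ := H1 h1 le_rfl
    obtain ⟨c2, m2, e2⟩ := H2 (h' - h1) (by omega)
    refine ⟨c1 * c2, ?_, ?_⟩
    · have hpow : J ^ h' = J ^ h1 * J ^ (h' - h1) := by
        rw [← pow_add]; congr 1; omega
      rw [hpow]; exact Ideal.mul_mem_mul m1 m2
    · have hpow : φ (z i) ^ h' = φ (z i) ^ h1 * φ (z i) ^ (h' - h1) := by
        rw [← pow_add]; congr 1; omega
      rw [hpow, map_mul, ← e1, ← e2]; ring

/-- Key computation in Lemma A.3 (`lem.BlowupOfNormalizedIdealPower`): if `R` is an integrally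
closed domain, `J = (z_1, …, z_m)` with the `z_i` nonzero, and `x ∈ Frac R` is integral over
the chart `R_i = R[z_1/z_i, …, z_m/z_i]` of the blowup of `J`, then `x = u / z_i^h` for some
`h ≥ 1` and some `u ∈ R` integral over the ideal `J^h`. -/
theorem exists_num_integral_over_pow_of_isIntegral_chart {R : Type*} [CommRing R] [IsDomain R]
    [IsIntegrallyClosed R] {m : ℕ} (z : Fin m → R) (hz : ∀ i, z i ≠ 0) (i : Fin m)
    (x : FractionRing R)
    (hx : IsIntegral
      (Algebra.adjoin R (Set.range fun j : Fin m =>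
        algebraMap R (FractionRing R) (z j) / algebraMap R (FractionRing R) (z i))) x) :
    ∃ h : ℕ, 1 ≤ h ∧ ∃ u : R,
      x = algebraMap R (FractionRing R) u / (algebraMap R (FractionRing R) (z i)) ^ h ∧
      ∃ l : ℕ, 1 ≤ l ∧ ∃ b : ℕ → R,
        (∀ j ∈ Finset.Icc 1 l, b j ∈ ((Ideal.span (Set.range z)) ^ h) ^ j) ∧
        u ^ l + ∑ j ∈ Finset.Icc 1 l, b j * u ^ (l - j) = 0 := by
  classical
  set φ := algebraMap R (FractionRing R) with hφ
  have hinj : Function.Injective φ := IsFractionRing.injective R (FractionRing R)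
  have hzi : φ (z i) ≠ 0 := fun h => hz i (hinj (by simpa using h))
  set S := Algebra.adjoin R (Set.range fun j : Fin m => φ (z j) / φ (z i)) with hS
  set J := Ideal.span (Set.range z) with hJ
  obtain ⟨p, pmonic, hpeval⟩ := hx
  set n := p.natDegree with hn
  have hn1 : 1 ≤ n := by
    rcases Nat.eq_zero_or_pos n with h0 | h1
    · exfalso
      have hp1 : p = 1 := (Polynomial.Monic.natDegree_eq_zero pmonic).mp h0
      rw [hp1] at hpeval
      simp at hpeval
    · exact h1
  have e0 : ∑ k ∈ Finset.range (n + 1),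
      (algebraMap S (FractionRing R) (p.coeff k)) * x ^ k = 0 := by
    rw [Polynomial.eval₂_eq_sum_range] at hpeval
    exact hpeval
  -- choose denominators for the coefficients
  have key : ∀ k : ℕ, ∃ h, ∀ h' ≥ h, ∃ c ∈ J ^ h',
      (algebraMap S (FractionRing R) (p.coeff k)) * φ (z i) ^ h' = φ c :=
    fun k => aux_chart_denom z hz i _ (p.coeff k).2
  choose hf Hf using key
  set H := (Finset.range n).sup hf + 1 with hH
  have hH1 : 1 ≤ H := Nat.le_add_left 1 _
  have coeffs : ∀ k : ℕ, ∃ c : R, k < n →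
      c ∈ J ^ H ∧ (algebraMap S (FractionRing R) (p.coeff k)) * φ (z i) ^ H = φ c := by
    intro k
    by_cases hk : k < n
    · obtain ⟨c, hc1, hc2⟩ := Hf k H
        (le_trans (Finset.le_sup (Finset.mem_range.mpr hk)) (Nat.le_succ _))
      exact ⟨c, fun _ => ⟨hc1, hc2⟩⟩
    · exact ⟨0, fun h => absurd h hk⟩
  choose c hc using coeffs
  set d : ℕ → R := fun k => c k * z i ^ (H * (n - k - 1)) with hd
  set u' : FractionRing R := x * φ (z i) ^ H with hu'
  -- multiplied integral equation in Frac R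
  have keyEq : u' ^ n + ∑ k ∈ Finset.range n, φ (d k) * u' ^ k = 0 := by
    have e1 : ∀ k ∈ Finset.range n, φ (d k) * u' ^ k
        = (algebraMap S (FractionRing R) (p.coeff k)) * x ^ k * φ (z i) ^ (H * n) := by
      intro k hk
      rw [Finset.mem_range] at hk
      have hck := (hc k hk).2
      have hsum : H * n = H + H * k + H * (n - k - 1) := by
        have e : 1 + k + (n - k - 1) = n := by omega
        calc H * n = H * (1 + k + (n - k - 1)) := by rw [e]
          _ = H + H * k + H * (n - k - 1) := by ring
      have hsplit : φ (z i) ^ (H * n)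
          = φ (z i) ^ H * φ (z i) ^ (H * k) * φ (z i) ^ (H * (n - k - 1)) := by
        rw [hsum, pow_add, pow_add]
      rw [hsplit, hd]
      simp only
      rw [map_mul, map_pow, ← hck, hu']
      ring
    have h0 : (∑ k ∈ Finset.range (n + 1),
        (algebraMap S (FractionRing R) (p.coeff k)) * x ^ k) * φ (z i) ^ (H * n) = 0 := by
      rw [e0, zero_mul]
    rw [Finset.sum_mul, Finset.sum_range_succ] at h0
    rw [← Finset.sum_congr rfl e1] at h0
    have hlead : (algebraMap S (FractionRing R) (p.coeff n)) = 1 := by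
      rw [show p.coeff n = 1 from pmonic.coeff_natDegree, map_one]
    rw [hlead, one_mul, show x ^ n * φ (z i) ^ (H * n) = u' ^ n by
      rw [hu', mul_pow, pow_mul]] at h0
    rw [add_comm]; exact h0
  -- u' is integral over R, hence lies in R
  set q : Polynomial R := X ^ n + ∑ k ∈ Finset.range n, C (d k) * X ^ k with hq
  have qmonic : q.Monic := by
    apply Polynomial.monic_X_pow_add
    refine lt_of_le_of_lt (Polynomial.degree_sum_le _ _) ?_
    rw [Finset.sup_lt_iff (by exact_mod_cast WithBot.bot_lt_coe n)]
    intro k hk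
    refine lt_of_le_of_lt (Polynomial.degree_C_mul_X_pow_le _ _) ?_
    exact_mod_cast Finset.mem_range.mp hk
  have haq : Polynomial.aeval u' q = 0 := by
    rw [hq]
    simp only [map_add, map_pow, Polynomial.aeval_X, map_sum, map_mul, Polynomial.aeval_C]
    exact keyEq
  have hui : IsIntegral R u' := ⟨q, qmonic, by rw [← Polynomial.aeval_def]; exact haq⟩
  obtain ⟨u, hu⟩ := IsIntegrallyClosed.isIntegral_iff.mp hui
  refine ⟨H, hH1, u, ?_, n, hn1, fun j => d (n - j), ?_, ?_⟩
  · rw [hu, hu', eq_div_iff (pow_ne_zero _ hzi)]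
  · intro j hj
    rw [Finset.mem_Icc] at hj
    rw [← pow_mul, hd]
    simp only
    have h1 : n - (n - j) - 1 = j - 1 := by omega
    have h2 : H * j = H + H * (j - 1) := by
      have e : 1 + (j - 1) = j := by omega
      calc H * j = H * (1 + (j - 1)) := by rw [e]
        _ = H + H * (j - 1) := by ring
    rw [h1, h2, pow_add]
    have hzimem : z i ∈ J := Ideal.subset_span ⟨i, rfl⟩
    exact Ideal.mul_mem_mul ((hc (n - j) (by omega)).1) (Ideal.pow_mem_pow hzimem _)
  · apply hinj
    rw [map_zero, map_add, map_pow, map_sum, hu]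
    have reindex : ∑ j ∈ Finset.Icc 1 n, φ (d (n - j) * u ^ (n - j))
        = ∑ k ∈ Finset.range n, φ (d k) * u' ^ k := by
      refine Finset.sum_nbij' (fun j => n - j) (fun k => n - k) ?_ ?_ ?_ ?_ ?_
      · intro a ha
        simp only [Finset.mem_Icc] at ha
        simp only [Finset.mem_range]; omega
      · intro a ha
        simp only [Finset.mem_range] at ha
        simp only [Finset.mem_Icc]; omega
      · intro a ha
        simp only [Finset.mem_Icc] at ha
        show n - (n - a) = a; omega
      · intro a ha
        simp only [Finset.mem_range] at ha
        show n - (n - a) = a; omega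
      · intro a ha
        show φ (d (n - a) * u ^ (n - a)) = φ (d (n - a)) * u' ^ (n - a)
        rw [map_mul, map_pow, hu]
    rw [reindex]
    exact keyEq
end
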